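/- Let (K,|·|) be a normed field, f ∈ K[z] a polynomial of degree n ≥ 2 having n simple zeros in K, ξ ∈ Kⁿ a root-vector of f, and 1 ≤ p ≤ ∞ with conjugate exponent q. Suppose x ∈ Kⁿ satisfies E(x) = ‖(x − ξ)/d(ξ)‖_p < 1/2^{1/q}. Then x has pairwise distinct components, E(Tx) ≤ E(x)·φ(E(x)), and |T_i(x) − ξ_i| ≤ φ(E(x)) · |x_i − ξ_i| for every i, where T is the Weierstrass iteration function and φ(t) = (1 + t/((n−1)^{1/p}(1 − 2^{1/q} t)))^{n−1} − 1. -/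

import Mathlib

open Finset Filter Topology
open scoped ENNReal

noncomputable def pnorm {n : ℕ} (p : ℝ≥0∞) (v : Fin n → ℝ) : ℝ :=
  if p = ⊤ then ⨆ i, |v i| else (∑ i, |v i| ^ p.toReal) ^ (1 / p.toReal)

noncomputable def epow (a : ℝ) (p : ℝ≥0∞) : ℝ :=
  if p = ⊤ then 1 else a ^ (1 / p.toReal)

noncomputable def dsep {K : Type*} [NormedField K] {n : ℕ} (x : Fin n → K) (i : Fin n) : ℝ :=
  sInf {r : ℝ | ∃ j, j ≠ i ∧ r = ‖x i - x j‖}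

noncomputable def Wcorr {K : Type*} [NormedField K] {n : ℕ} (f : Polynomial K)
    (x : Fin n → K) (i : Fin n) : K :=
  Polynomial.eval (x i) f / (f.leadingCoeff * ∏ j ∈ Finset.univ.erase i, (x i - x j))

def IsRootVector {K : Type*} [NormedField K] {n : ℕ} (f : Polynomial K) (ξ : Fin n → K) : Prop :=
  ∀ z : K, Polynomial.eval z f = f.leadingCoeff * ∏ i, (z - ξ i)

namespace WK

lemma conj_cases {p q : ℝ≥0∞} (hp : 1 ≤ p) (hpq : 1 / p + 1 / q = 1) :
    (p = 1 ∧ q = ⊤) ∨ (p = ⊤ ∧ q = 1) ∨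
      (p ≠ ⊤ ∧ q ≠ ⊤ ∧ Real.HolderConjugate p.toReal q.toReal) := by
  rcases eq_or_ne p 1 with hp1 | hp1
  · left
    refine ⟨hp1, ?_⟩
    rw [hp1] at hpq
    simp only [ne_eq, one_div, inv_one] at hpq
    have h0 : (1:ℝ≥0∞) + q⁻¹ = 1 + 0 := by simpa using hpq
    have : q⁻¹ = 0 := (ENNReal.add_right_inj (by simp)).1 h0
    simpa [ENNReal.inv_eq_zero] using this
  rcases eq_or_ne p ⊤ with hpt | hpt
  · right; left
    refine ⟨hpt, ?_⟩
    rw [hpt] at hpq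
    simp only [one_div, ENNReal.inv_top, zero_add] at hpq
    simpa [inv_eq_one] using hpq
  · right; right
    have hp0 : p ≠ 0 := (zero_lt_one.trans_le hp).ne'
    have hq0 : q ≠ 0 := by
      rintro rfl
      simp [ENNReal.div_zero] at hpq
    have hqt : q ≠ ⊤ := by
      rintro rfl
      simp only [one_div, ENNReal.inv_top, add_zero] at hpq
      exact hp1 (by simpa [inv_eq_one] using hpq)
    refine ⟨hpt, hqt, Real.holderConjugate_iff.mpr ⟨?_, ?_⟩⟩
    · -- 1 < p.toReal
      have h1 : 1 < p := lt_of_le_of_ne hp (Ne.symm hp1)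
      have := (ENNReal.toReal_lt_toReal (by simp) hpt).2 h1
      simpa using this
    · -- p.toReal⁻¹ + q.toReal⁻¹ = 1
      have hfin1 : (1/p) ≠ ⊤ := by simp [hp0]
      have hfin2 : (1/q) ≠ ⊤ := by simp [hq0]
      have := congrArg ENNReal.toReal hpq
      rw [ENNReal.toReal_add hfin1 hfin2] at this
      simpa [ENNReal.toReal_div, one_div] using this


lemma pnorm_nonneg {n : ℕ} (p : ℝ≥0∞) (v : Fin n → ℝ) : 0 ≤ pnorm p v := by
  unfold pnorm
  split
  · exact Real.iSup_nonneg fun i => abs_nonneg _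
  · positivity

lemma toReal_pos' {p : ℝ≥0∞} (hp : 1 ≤ p) (hpt : p ≠ ⊤) : 0 < p.toReal :=
  ENNReal.toReal_pos (zero_lt_one.trans_le hp).ne' hpt

lemma one_le_toReal {p : ℝ≥0∞} (hp : 1 ≤ p) (hpt : p ≠ ⊤) : 1 ≤ p.toReal := by
  have : (1:ℝ≥0∞).toReal ≤ p.toReal := ENNReal.toReal_mono hpt hp
  simpa using this

lemma abs_le_pnorm {n : ℕ} {p : ℝ≥0∞} (hp : 1 ≤ p) (v : Fin n → ℝ) (i : Fin n) :
    |v i| ≤ pnorm p v := by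
  unfold pnorm
  split
  · exact le_ciSup (f := fun j => |v j|) (Set.Finite.bddAbove (Set.finite_range _)) i
  · rename_i hpt
    have hr : 0 < p.toReal := toReal_pos' hp hpt
    have h1 : |v i| = (|v i| ^ p.toReal) ^ (1 / p.toReal) := by
      rw [one_div, Real.rpow_rpow_inv (abs_nonneg _) hr.ne']
    rw [h1]
    apply Real.rpow_le_rpow (by positivity) ?_ (by positivity)
    exact Finset.single_le_sum (f := fun j => |v j| ^ p.toReal) (fun j _ => by positivity) (Finset.mem_univ i)


lemma epow_pos {a : ℝ} (ha : 0 < a) (p : ℝ≥0∞) : 0 < epow a p := by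
  unfold epow; split
  · exact one_pos
  · exact Real.rpow_pos_of_pos ha _

lemma epow_mul_epow {a : ℝ} (ha : 0 < a) {p q : ℝ≥0∞} (hp : 1 ≤ p) (hpq : 1 / p + 1 / q = 1) :
    epow a p * epow a q = a := by
  rcases conj_cases hp hpq with ⟨hp1, hq⟩ | ⟨hp1, hq⟩ | ⟨hpt, hqt, hc⟩ <;>
    subst_vars <;> unfold epow <;> simp_all
  rw [← Real.rpow_add ha, hc.inv_add_inv_eq_one, Real.rpow_one]

lemma sum_le_pnorm {n : ℕ} {p q : ℝ≥0∞} (hp : 1 ≤ p) (hpq : 1 / p + 1 / q = 1)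
    (v : Fin n → ℝ) (S : Finset (Fin n)) :
    ∑ k ∈ S, |v k| ≤ epow (S.card : ℝ) q * pnorm p v := by
  rcases conj_cases hp hpq with ⟨hp1, hq⟩ | ⟨hp1, hq⟩ | ⟨hpt, hqt, hc⟩
  · subst_vars
    have : epow (S.card : ℝ) ⊤ = 1 := by unfold epow; simp
    rw [this, one_mul]
    unfold pnorm
    simp only [ENNReal.one_ne_top, if_false, ENNReal.toReal_one, Real.rpow_one, div_one]
    exact Finset.sum_le_sum_of_subset_of_nonneg (Finset.subset_univ S)
      (fun i _ _ => abs_nonneg _)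
  · subst_vars
    have h1 : epow (S.card : ℝ) 1 = S.card := by
      unfold epow; simp
    rw [h1]
    unfold pnorm
    simp only [if_pos rfl]
    calc ∑ k ∈ S, |v k| ≤ ∑ _k ∈ S, ⨆ i, |v i| := by
          refine Finset.sum_le_sum fun k _ => ?_
          exact le_ciSup (f := fun j => |v j|) (Set.Finite.bddAbove (Set.finite_range _)) k
      _ = S.card * ⨆ i, |v i| := by rw [Finset.sum_const, nsmul_eq_mul]
  · have hr : 0 < p.toReal := toReal_pos' hp hpt
    have hs : 0 < q.toReal := hc.symm.pos
    have h1 : ∑ k ∈ S, |v k| = ∑ k ∈ S, |v k| * 1 := by simp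
    rw [h1]
    calc ∑ k ∈ S, |v k| * 1
        ≤ (∑ k ∈ S, |(|v k|)| ^ p.toReal) ^ (1 / p.toReal) *
          (∑ _k ∈ S, |(1:ℝ)| ^ q.toReal) ^ (1 / q.toReal) :=
          Real.inner_le_Lp_mul_Lq S (fun k => |v k|) (fun _ => 1) hc
      _ = (∑ k ∈ S, |v k| ^ p.toReal) ^ (1 / p.toReal) * (S.card : ℝ) ^ (1 / q.toReal) := by
          simp [abs_abs, Real.one_rpow]
      _ ≤ (∑ k, |v k| ^ p.toReal) ^ (1 / p.toReal) * (S.card : ℝ) ^ (1 / q.toReal) := by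
          refine mul_le_mul_of_nonneg_right ?_ (by positivity)
          exact Real.rpow_le_rpow (Finset.sum_nonneg fun k _ => by positivity)
            (Finset.sum_le_sum_of_subset_of_nonneg (Finset.subset_univ S)
              (fun i _ _ => by positivity)) (by positivity)
      _ = epow (S.card : ℝ) q * pnorm p v := by
          unfold epow pnorm
          rw [if_neg hqt, if_neg hpt, mul_comm]

lemma pnorm_le_mul {n : ℕ} (hn : 0 < n) {p : ℝ≥0∞} (hp : 1 ≤ p) {v w : Fin n → ℝ} {c : ℝ}
    (hc : 0 ≤ c) (h : ∀ i, |w i| ≤ c * |v i|) : pnorm p w ≤ c * pnorm p v := by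
  haveI : Nonempty (Fin n) := ⟨⟨0, hn⟩⟩
  unfold pnorm
  split
  · refine ciSup_le fun i => ?_
    exact (h i).trans (mul_le_mul_of_nonneg_left
      (le_ciSup (f := fun j => |v j|) (Set.Finite.bddAbove (Set.finite_range _)) i) hc)
  · rename_i hpt
    have hr : 0 < p.toReal := toReal_pos' hp hpt
    calc (∑ i, |w i| ^ p.toReal) ^ (1 / p.toReal)
        ≤ (∑ i, (c * |v i|) ^ p.toReal) ^ (1 / p.toReal) :=
          Real.rpow_le_rpow (Finset.sum_nonneg fun i _ => by positivity)
            (Finset.sum_le_sum fun i _ => Real.rpow_le_rpow (abs_nonneg _) (h i) hr.le)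
            (by positivity)
      _ = (c ^ p.toReal * ∑ i, |v i| ^ p.toReal) ^ (1 / p.toReal) := by
          rw [Finset.mul_sum]
          congr 1
          refine Finset.sum_congr rfl fun i _ => ?_
          rw [Real.mul_rpow hc (abs_nonneg _)]
      _ = c * (∑ i, |v i| ^ p.toReal) ^ (1 / p.toReal) := by
          rw [Real.mul_rpow (by positivity) (Finset.sum_nonneg fun i _ => by positivity),
            one_div, Real.rpow_rpow_inv hc hr.ne']

lemma norm_prod_one_add_sub_one {K : Type*} [NormedField K] {ι : Type*} (s : Finset ι)
    (c : ι → K) : ‖∏ k ∈ s, (1 + c k) - 1‖ ≤ ∏ k ∈ s, (1 + ‖c k‖) - 1 := by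
  classical
  induction s using Finset.induction_on with
  | empty => simp
  | insert a s ha ih =>
    rw [Finset.prod_insert ha, Finset.prod_insert ha]
    have hQ1 : (1:ℝ) ≤ ∏ k ∈ s, (1 + ‖c k‖) := by
      have := Finset.prod_le_prod (s := s) (f := fun _ : ι => (1:ℝ)) (g := fun k => 1 + ‖c k‖)
        (fun k _ => zero_le_one) (fun k _ => by show (1:ℝ) ≤ 1 + ‖c k‖; linarith [norm_nonneg (c k)])
      simpa using this
    have hP : ‖∏ k ∈ s, (1 + c k)‖ ≤ ∏ k ∈ s, (1 + ‖c k‖) := by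
      calc ‖∏ k ∈ s, (1 + c k)‖ ≤ ‖∏ k ∈ s, (1 + c k) - 1‖ + ‖(1:K)‖ := by
            simpa using norm_add_le (∏ k ∈ s, (1 + c k) - 1) 1
        _ ≤ ∏ k ∈ s, (1 + ‖c k‖) := by
            have := ih
            simp only [norm_one]
            linarith
    have key : (1 + c a) * ∏ k ∈ s, (1 + c k) - 1
        = (∏ k ∈ s, (1 + c k) - 1) + c a * ∏ k ∈ s, (1 + c k) := by ring
    rw [key]
    calc ‖(∏ k ∈ s, (1 + c k) - 1) + c a * ∏ k ∈ s, (1 + c k)‖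
        ≤ ‖∏ k ∈ s, (1 + c k) - 1‖ + ‖c a * ∏ k ∈ s, (1 + c k)‖ := norm_add_le _ _
      _ = ‖∏ k ∈ s, (1 + c k) - 1‖ + ‖c a‖ * ‖∏ k ∈ s, (1 + c k)‖ := by rw [norm_mul]
      _ ≤ (∏ k ∈ s, (1 + ‖c k‖) - 1) + ‖c a‖ * ∏ k ∈ s, (1 + ‖c k‖) := by
          gcongr
      _ = (1 + ‖c a‖) * ∏ k ∈ s, (1 + ‖c k‖) - 1 := by ring

lemma prod_one_add_le_amgm {ι : Type*} (s : Finset ι) (a : ι → ℝ) (ha : ∀ k ∈ s, 0 ≤ a k)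
    (hs : s.Nonempty) :
    ∏ k ∈ s, (1 + a k) ≤ (1 + (∑ k ∈ s, a k) / s.card) ^ s.card := by
  have hm : 0 < (s.card : ℝ) := by exact_mod_cast Finset.card_pos.2 hs
  have hz : ∀ k ∈ s, (0:ℝ) ≤ 1 + a k := fun k hk => by linarith [ha k hk]
  have hgm := Real.geom_mean_le_arith_mean_weighted s (fun _ => (s.card : ℝ)⁻¹)
    (fun k => 1 + a k) (fun k _ => by positivity)
    (by rw [Finset.sum_const, nsmul_eq_mul, mul_inv_cancel₀ hm.ne']) hz
  have hG : (∏ k ∈ s, (1 + a k) ^ (s.card : ℝ)⁻¹) ^ s.card = ∏ k ∈ s, (1 + a k) := by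
    rw [← Finset.prod_pow]
    refine Finset.prod_congr rfl fun k hk => ?_
    rw [← Real.rpow_natCast ((1 + a k) ^ (s.card : ℝ)⁻¹) s.card,
      ← Real.rpow_mul (hz k hk), inv_mul_cancel₀ hm.ne', Real.rpow_one]
  have hsum : ∑ k ∈ s, (s.card : ℝ)⁻¹ * (1 + a k) = 1 + (∑ k ∈ s, a k) / s.card := by
    rw [← Finset.mul_sum, Finset.sum_add_distrib, Finset.sum_const, nsmul_eq_mul, mul_one]
    field_simp
  calc ∏ k ∈ s, (1 + a k) = (∏ k ∈ s, (1 + a k) ^ (s.card : ℝ)⁻¹) ^ s.card := hG.symm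
    _ ≤ (1 + (∑ k ∈ s, a k) / s.card) ^ s.card := by
        apply pow_le_pow_left₀ (Finset.prod_nonneg fun k hk => Real.rpow_nonneg (hz k hk) _)
        rw [← hsum]; exact hgm

lemma dsep_le {K : Type*} [NormedField K] {n : ℕ} (ξ : Fin n → K) {i j : Fin n} (hj : j ≠ i) :
    dsep ξ i ≤ ‖ξ i - ξ j‖ := by
  apply csInf_le
  · apply Set.Finite.bddBelow
    apply Set.Finite.subset (Set.finite_range fun j => ‖ξ i - ξ j‖)
    rintro r ⟨k, _, rfl⟩
    exact ⟨k, rfl⟩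
  · exact ⟨j, hj, rfl⟩

lemma dsep_pos {K : Type*} [NormedField K] {n : ℕ} (hn : 2 ≤ n) {ξ : Fin n → K}
    (hξ : Function.Injective ξ) (i : Fin n) : 0 < dsep ξ i := by
  have hfin : {r : ℝ | ∃ j, j ≠ i ∧ r = ‖ξ i - ξ j‖}.Finite := by
    apply Set.Finite.subset (Set.finite_range fun j => ‖ξ i - ξ j‖)
    rintro r ⟨k, _, rfl⟩
    exact ⟨k, rfl⟩
  have hne : {r : ℝ | ∃ j, j ≠ i ∧ r = ‖ξ i - ξ j‖}.Nonempty := by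
    obtain ⟨j, hj⟩ := Fintype.exists_ne_of_one_lt_card (by simp; omega) i
    exact ⟨‖ξ i - ξ j‖, j, hj, rfl⟩
  have hmem := hne.csInf_mem hfin
  obtain ⟨j, hj, hr⟩ := hmem
  rw [dsep, hr]
  rw [norm_pos_iff, sub_ne_zero]
  exact fun h => hj (hξ h.symm)

end WK

/-- If `f` has `n` simple zeros with root-vector `ξ` and
`E(x) = ‖(x−ξ)/d(ξ)‖_p < 1/2^{1/q}`, then `x` has pairwise distinct components,
`E(Tx) ≤ E(x)·φ(E(x))` and `|T_i(x) − ξ_i| ≤ φ(E(x))·|x_i − ξ_i|`, where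
`φ(t) = (1 + t/((n−1)^{1/p}(1 − 2^{1/q}t)))^{n−1} − 1`. -/
theorem weierstrass_first_kind_contraction {K : Type*} [NormedField K] {n : ℕ} (hn : 2 ≤ n)
    (f : Polynomial K) (hdeg : f.natDegree = n)
    (ξ : Fin n → K) (hroot : IsRootVector f ξ) (hξ : Function.Injective ξ)
    (p q : ℝ≥0∞) (hp : 1 ≤ p) (hpq : 1 / p + 1 / q = 1)
    (E : (Fin n → K) → ℝ)
    (hE : ∀ y : Fin n → K, E y = pnorm p (fun i => ‖y i - ξ i‖ / dsep ξ i))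
    (φ : ℝ → ℝ)
    (hφ : ∀ t : ℝ, φ t = (1 + t / (epow ((n : ℝ) - 1) p * (1 - epow 2 q * t))) ^ (n - 1) - 1)
    (x : Fin n → K) (hx : E x < 1 / epow 2 q) :
    Function.Injective x ∧
    E (fun i => x i - Wcorr f x i) ≤ E x * φ (E x) ∧
    ∀ i : Fin n, ‖(x i - Wcorr f x i) - ξ i‖ ≤ φ (E x) * ‖x i - ξ i‖ := by
  have hn0 : 0 < n := by omega
  set d : Fin n → ℝ := dsep ξ with hd
  have hdpos : ∀ i, 0 < d i := fun i => WK.dsep_pos hn hξ i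
  set e : Fin n → ℝ := fun i => ‖x i - ξ i‖ / d i with he
  have hepos : ∀ i, 0 ≤ e i := fun i => div_nonneg (norm_nonneg _) (hdpos i).le
  have hExE : E x = pnorm p e := by rw [he]; exact hE x
  have hE0 : 0 ≤ E x := by rw [hExE]; exact WK.pnorm_nonneg p e
  have hq2pos : 0 < epow 2 q := WK.epow_pos two_pos q
  have hβ1 : epow 2 q * E x < 1 := by
    have := (lt_div_iff₀ hq2pos).1 hx
    linarith
  have h1β : 0 < 1 - epow 2 q * E x := by linarith
  have hu : ∀ i, ‖x i - ξ i‖ = e i * d i := fun i =>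
    (div_mul_cancel₀ _ (hdpos i).ne').symm
  have hdle : ∀ i j, j ≠ i → d i ≤ ‖ξ i - ξ j‖ := fun i j hj => WK.dsep_le ξ hj
  have hpair : ∀ i j, i ≠ j → e i + e j ≤ epow 2 q * E x := by
    intro i j hij
    have h1 := WK.sum_le_pnorm hp hpq e ({i, j} : Finset (Fin n))
    rw [Finset.sum_pair hij, Finset.card_pair hij,
      abs_of_nonneg (hepos i), abs_of_nonneg (hepos j)] at h1
    rw [hExE]
    simpa using h1
  have hξpos : ∀ i j, i ≠ j → 0 < ‖ξ i - ξ j‖ := fun i j hij => by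
    rw [norm_pos_iff, sub_ne_zero]; exact fun h => hij (hξ h)
  have hsep : ∀ i j, i ≠ j → (1 - epow 2 q * E x) * ‖ξ i - ξ j‖ ≤ ‖x i - x j‖ := by
    intro i j hij
    have h1 : ‖ξ i - ξ j‖ - (‖x i - ξ i‖ + ‖x j - ξ j‖) ≤ ‖x i - x j‖ := by
      have h2 : ‖ξ i - ξ j‖ ≤ ‖(x i - x j) - (x i - ξ i)‖ + ‖x j - ξ j‖ := by
        have : ξ i - ξ j = ((x i - x j) - (x i - ξ i)) + (x j - ξ j) := by ring
        rw [this]; exact norm_add_le _ _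
      have h3 := norm_sub_le (x i - x j) (x i - ξ i)
      linarith
    have h2 : ‖x i - ξ i‖ ≤ e i * ‖ξ i - ξ j‖ := by
      rw [hu i]; exact mul_le_mul_of_nonneg_left (hdle i j hij.symm) (hepos i)
    have h3 : ‖x j - ξ j‖ ≤ e j * ‖ξ i - ξ j‖ := by
      have h4 := hdle j i hij
      rw [norm_sub_rev] at h4
      rw [hu j]; exact mul_le_mul_of_nonneg_left h4 (hepos j)
    have h4 := hpair i j hij
    have h5 := mul_le_mul_of_nonneg_right h4 (norm_nonneg (ξ i - ξ j))
    have h6 : (e i + e j) * ‖ξ i - ξ j‖ = e i * ‖ξ i - ξ j‖ + e j * ‖ξ i - ξ j‖ := by ring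
    nlinarith
  have hxinj : Function.Injective x := by
    intro i j hEq
    by_contra hij
    have h1 := hsep i j hij
    rw [hEq, sub_self, norm_zero] at h1
    nlinarith [hξpos i j hij]
  have hf0 : f ≠ 0 := by
    intro h
    rw [h, Polynomial.natDegree_zero] at hdeg
    omega
  have ha0 : f.leadingCoeff ≠ 0 := Polynomial.leadingCoeff_ne_zero.2 hf0
  have hφ0 : 0 ≤ φ (E x) := by
    rw [hφ]
    have hn1 : (0:ℝ) < (n:ℝ) - 1 := by
      have : (2:ℝ) ≤ (n:ℝ) := by exact_mod_cast hn
      linarith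
    have hep : 0 < epow ((n:ℝ) - 1) p := WK.epow_pos hn1 p
    have hb : (1:ℝ) ≤ 1 + E x / (epow ((n:ℝ) - 1) p * (1 - epow 2 q * E x)) := by
      have : 0 ≤ E x / (epow ((n:ℝ) - 1) p * (1 - epow 2 q * E x)) := by positivity
      linarith
    have := one_le_pow₀ hb (n := n - 1)
    linarith
  have hkey : ∀ i, ‖(x i - Wcorr f x i) - ξ i‖ ≤ φ (E x) * ‖x i - ξ i‖ := by
    intro i
    have hxik : ∀ k ∈ Finset.univ.erase i, x i - x k ≠ 0 := by
      intro k hk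
      rw [sub_ne_zero]
      exact fun h => (Finset.mem_erase.1 hk).1 ((hxinj h).symm)
    set t : Fin n → K := fun k => (x k - ξ k) / (x i - x k) with ht
    have hW : Wcorr f x i = (x i - ξ i) * ∏ k ∈ Finset.univ.erase i, (1 + t k) := by
      unfold Wcorr
      rw [hroot (x i),
        ← Finset.mul_prod_erase Finset.univ (fun k => x i - ξ k) (Finset.mem_univ i),
        mul_div_mul_left _ _ ha0, mul_div_assoc, ← Finset.prod_div_distrib]
      congr 1
      refine Finset.prod_congr rfl fun k hk => ?_
      have hne := hxik k hk
      rw [ht]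
      field_simp
      ring
    have hTi : (x i - Wcorr f x i) - ξ i
        = (x i - ξ i) * (1 - ∏ k ∈ Finset.univ.erase i, (1 + t k)) := by
      rw [hW]; ring
    have htk : ∀ k ∈ Finset.univ.erase i, ‖t k‖ ≤ e k / (1 - epow 2 q * E x) := by
      intro k hk
      have hki : k ≠ i := (Finset.mem_erase.1 hk).1
      have hik : i ≠ k := hki.symm
      have hsep2 := hsep i k hik
      have hN := hξpos i k hik
      have h1 : ‖x k - ξ k‖ ≤ e k * ‖ξ i - ξ k‖ := by
        have h4 := hdle k i hik
        rw [norm_sub_rev] at h4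
        rw [hu k]; exact mul_le_mul_of_nonneg_left h4 (hepos k)
      rw [ht]
      show ‖(x k - ξ k) / (x i - x k)‖ ≤ e k / (1 - epow 2 q * E x)
      rw [norm_div]
      calc ‖x k - ξ k‖ / ‖x i - x k‖
          ≤ (e k * ‖ξ i - ξ k‖) / ((1 - epow 2 q * E x) * ‖ξ i - ξ k‖) :=
            div_le_div₀ (mul_nonneg (hepos k) (norm_nonneg _)) h1 (by positivity) hsep2
        _ = e k / (1 - epow 2 q * E x) := mul_div_mul_right _ _ hN.ne'
    have hScard : (Finset.univ.erase i).card = n - 1 := by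
      rw [Finset.card_erase_of_mem (Finset.mem_univ i), Finset.card_univ, Fintype.card_fin]
    have hSne : (Finset.univ.erase i).Nonempty := Finset.card_pos.1 (by omega)
    have hn1 : (0:ℝ) < (n:ℝ) - 1 := by
      have : (2:ℝ) ≤ (n:ℝ) := by exact_mod_cast hn
      linarith
    have hnm : ((Finset.univ.erase i).card : ℝ) = (n:ℝ) - 1 := by
      rw [hScard, Nat.cast_sub (by omega), Nat.cast_one]
    have hep : 0 < epow ((n:ℝ) - 1) p := WK.epow_pos hn1 p
    have heq : 0 < epow ((n:ℝ) - 1) q := WK.epow_pos hn1 q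
    have hprod : epow ((n:ℝ) - 1) p * epow ((n:ℝ) - 1) q = (n:ℝ) - 1 :=
      WK.epow_mul_epow hn1 hp hpq
    have hsumt : ∑ k ∈ Finset.univ.erase i, ‖t k‖
        ≤ epow ((n:ℝ) - 1) q * E x / (1 - epow 2 q * E x) := by
      calc ∑ k ∈ Finset.univ.erase i, ‖t k‖
          ≤ ∑ k ∈ Finset.univ.erase i, e k / (1 - epow 2 q * E x) :=
            Finset.sum_le_sum htk
        _ = (∑ k ∈ Finset.univ.erase i, e k) / (1 - epow 2 q * E x) := by
            rw [Finset.sum_div]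
        _ ≤ epow ((n:ℝ) - 1) q * E x / (1 - epow 2 q * E x) := by
            apply div_le_div₀ ?_ ?_ h1β le_rfl
            · positivity
            · have h5 := WK.sum_le_pnorm hp hpq e (Finset.univ.erase i)
              rw [hnm, ← hExE] at h5
              calc ∑ k ∈ Finset.univ.erase i, e k
                  = ∑ k ∈ Finset.univ.erase i, |e k| :=
                    Finset.sum_congr rfl fun k _ => (abs_of_nonneg (hepos k)).symm
                _ ≤ epow ((n:ℝ) - 1) q * E x := h5
    have hAM : ∏ k ∈ Finset.univ.erase i, (1 + ‖t k‖)
        ≤ (1 + (∑ k ∈ Finset.univ.erase i, ‖t k‖) / (Finset.univ.erase i).card)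
            ^ (Finset.univ.erase i).card :=
      WK.prod_one_add_le_amgm _ _ (fun k _ => norm_nonneg _) hSne
    have hbase : (∑ k ∈ Finset.univ.erase i, ‖t k‖) / ((Finset.univ.erase i).card : ℝ)
        ≤ E x / (epow ((n:ℝ) - 1) p * (1 - epow 2 q * E x)) := by
      rw [hnm]
      calc (∑ k ∈ Finset.univ.erase i, ‖t k‖) / ((n:ℝ) - 1)
          ≤ (epow ((n:ℝ) - 1) q * E x / (1 - epow 2 q * E x)) / ((n:ℝ) - 1) :=
            div_le_div_of_nonneg_right hsumt hn1.le
        _ = E x / (epow ((n:ℝ) - 1) p * (1 - epow 2 q * E x)) := by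
            generalize epow ((n:ℝ) - 1) p = A at hep hprod ⊢
            generalize epow ((n:ℝ) - 1) q = B at heq hprod ⊢
            rw [← hprod]
            field_simp
    have hfinal : ‖1 - ∏ k ∈ Finset.univ.erase i, (1 + t k)‖ ≤ φ (E x) := by
      rw [norm_sub_rev]
      have hb1 : (0:ℝ) ≤ 1 + (∑ k ∈ Finset.univ.erase i, ‖t k‖) / (Finset.univ.erase i).card := by
        exact add_nonneg zero_le_one (div_nonneg (Finset.sum_nonneg fun k _ => norm_nonneg _) (Nat.cast_nonneg _))
      have hpow := pow_le_pow_left₀ hb1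
        (by linarith [hbase] :
          1 + (∑ k ∈ Finset.univ.erase i, ‖t k‖) / ((Finset.univ.erase i).card : ℝ)
            ≤ 1 + E x / (epow ((n:ℝ) - 1) p * (1 - epow 2 q * E x)))
        (Finset.univ.erase i).card
      calc ‖∏ k ∈ Finset.univ.erase i, (1 + t k) - 1‖
          ≤ ∏ k ∈ Finset.univ.erase i, (1 + ‖t k‖) - 1 :=
            WK.norm_prod_one_add_sub_one _ t
        _ ≤ (1 + E x / (epow ((n:ℝ) - 1) p * (1 - epow 2 q * E x)))
              ^ (Finset.univ.erase i).card - 1 := by linarith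
        _ = φ (E x) := by rw [hφ (E x), hScard]
    rw [hTi, norm_mul, mul_comm (φ (E x))]
    exact mul_le_mul_of_nonneg_left hfinal (norm_nonneg _)
  refine ⟨hxinj, ?_, hkey⟩
  rw [hE (fun i => x i - Wcorr f x i)]
  have hcomp : ∀ i : Fin n, |‖(x i - Wcorr f x i) - ξ i‖ / d i| ≤ φ (E x) * |e i| := by
    intro i
    rw [abs_of_nonneg (div_nonneg (norm_nonneg _) (hdpos i).le), abs_of_nonneg (hepos i)]
    calc ‖(x i - Wcorr f x i) - ξ i‖ / d i
        ≤ (φ (E x) * ‖x i - ξ i‖) / d i :=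
          div_le_div_of_nonneg_right (hkey i) (hdpos i).le
      _ = φ (E x) * (‖x i - ξ i‖ / d i) := mul_div_assoc _ _ _
      _ = φ (E x) * e i := rfl
  calc pnorm p (fun i => ‖(fun i => x i - Wcorr f x i) i - ξ i‖ / d i)
      ≤ φ (E x) * pnorm p e := WK.pnorm_le_mul hn0 hp hφ0 hcomp
    _ = E x * φ (E x) := by rw [← hExE, mul_comm]
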